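/- For every integer n ≥ 2, the number of tuples (p, (i_1,…,i_p), (j_1,…,j_p)) of integers with 0 ≤ p ≤ n-1, 1 ≤ i_1 < i_2 < ⋯ < i_p ≤ n-1, 1 ≤ j_1 < j_2 < ⋯ < j_p ≤ n-1 and j_k ≤ i_k for all 1 ≤ k ≤ p, equals the n-th Catalan number C_n = (1/(n+1))·binom(2n, n). -/

import Mathlib

open List DyckStep

namespace TLCount

/-- The strict product order on pairs. -/
def R (p q : ℕ × ℕ) : Prop := p.1 < q.1 ∧ p.2 < q.2

instance : IsTrans (ℕ × ℕ) R :=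
  ⟨fun _ _ _ h₁ h₂ => ⟨lt_trans h₁.1 h₂.1, lt_trans h₁.2 h₂.2⟩⟩

/-- Strictly increasing in both coordinates, relative to start `(a, b)`. -/
def Incr (a b : ℕ) (m : List (ℕ × ℕ)) : Prop := List.Chain R (a, b) m

/-- Encode a list of cumulative run-length pairs into a step word. -/
def enc : ℕ → ℕ → List (ℕ × ℕ) → List DyckStep
  | _, _, [] => []
  | a, b, (i, j) :: t => replicate (i - a) U ++ (replicate (j - b) D ++ enc i j t)

lemma enc_nil (a b : ℕ) : enc a b [] = [] := rfl

lemma enc_cons (a b i j : ℕ) (t : List (ℕ × ℕ)) :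
    enc a b ((i, j) :: t) = replicate (i - a) U ++ (replicate (j - b) D ++ enc i j t) := rfl

/-- Decode the valleys (D immediately followed by U) of a step word. -/
def dec : List DyckStep → ℕ → ℕ → List (ℕ × ℕ)
  | [], _, _ => []
  | U :: rest, a, b => dec rest (a + 1) b
  | D :: rest, a, b =>
      (match rest with
       | U :: _ => [(a, b + 1)]
       | _ => []) ++ dec rest a (b + 1)

lemma length_eq_count (w : List DyckStep) : w.length = w.count U + w.count D := by
  induction w with
  | nil => simp
  | cons s t ih =>
    cases s <;> simp [ih, count_cons] <;> omega


lemma countU_repU (c : ℕ) : count U (replicate c U) = c := by simp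
lemma countU_repD (c : ℕ) : count U (replicate c D) = 0 := by simp [count_replicate]
lemma countD_repD (c : ℕ) : count D (replicate c D) = c := by simp
lemma countD_repU (c : ℕ) : count D (replicate c U) = 0 := by simp [count_replicate]

lemma count_U_enc {a b : ℕ} {m : List (ℕ × ℕ)} (h : Incr a b m) :
    (enc a b m).count U + a = (m.getLastD (a, b)).1 := by
  induction m generalizing a b with
  | nil => simp [enc_nil]
  | cons p t ih =>
    obtain ⟨i, j⟩ := p
    rw [Incr, List.Chain, chain_cons] at h
    have h1 : a < i := h.1.1
    have := ih (a := i) (b := j) h.2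
    rw [enc_cons, getLastD_cons]
    simp only [count_append, countU_repU, countU_repD]
    omega

lemma count_D_enc {a b : ℕ} {m : List (ℕ × ℕ)} (h : Incr a b m) :
    (enc a b m).count D + b = (m.getLastD (a, b)).2 := by
  induction m generalizing a b with
  | nil => simp [enc_nil]
  | cons p t ih =>
    obtain ⟨i, j⟩ := p
    rw [Incr, List.Chain, chain_cons] at h
    have h2 : b < j := h.1.2
    have := ih (a := i) (b := j) h.2
    rw [enc_cons, getLastD_cons]
    simp only [count_append, countD_repD, countD_repU]
    omega

/-- The prefix inequality for encoded words. -/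
lemma prefix_count {m : List (ℕ × ℕ)} {a b : ℕ} (h : Incr a b m)
    (hji : ∀ p ∈ m, p.2 ≤ p.1) (hba : b ≤ a) (k : ℕ) :
    (take k (enc a b m)).count D + b ≤ (take k (enc a b m)).count U + a := by
  induction m generalizing a b k with
  | nil => simpa [enc_nil] using hba
  | cons p t ih =>
    obtain ⟨i, j⟩ := p
    rw [Incr, List.Chain, chain_cons] at h
    have h1 : a < i := h.1.1
    have h2 : b < j := h.1.2
    have hj : j ≤ i := hji (i, j) (by simp)
    have ih' := ih (a := i) (b := j) h.2 (fun p hp => hji p (by simp [hp])) hj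
      (k - (i - a) - (j - b))
    rw [enc_cons]
    simp only [take_append, count_append, take_replicate,
      length_replicate, Nat.sub_sub, countU_repU, countU_repD, countD_repD, countD_repU]
    rw [Nat.sub_sub] at ih'
    have hf : (take (k - (i - a + (j - b))) (enc i j t)).count D ≤ k - (i - a + (j - b)) :=
      count_le_length.trans (by simpa using length_take_le _ _)
    have he : (take (k - (i - a + (j - b))) (enc i j t)).count U ≤ k - (i - a + (j - b)) :=
      count_le_length.trans (by simpa using length_take_le _ _)
    omega

lemma dec_replicate_U (c : ℕ) (w : List DyckStep) (a b : ℕ) :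
    dec (replicate c U ++ w) a b = dec w (a + c) b := by
  induction c generalizing a with
  | zero => simp
  | succ c ih =>
    rw [replicate_succ, cons_append]
    show dec _ (a + 1) b = _
    rw [ih]
    ring_nf

lemma dec_replicate_D_nil (d : ℕ) (a b : ℕ) :
    dec (replicate d D) a b = [] := by
  induction d generalizing b with
  | zero => rfl
  | succ d ih =>
    rw [replicate_succ]
    show (match replicate d D with
       | U :: _ => [(a, b + 1)]
       | _ => []) ++ dec (replicate d D) a (b + 1) = []
    rw [ih]
    cases d <;> simp [replicate_succ]

lemma dec_replicate_D_U {d : ℕ} (hd : 1 ≤ d) (w : List DyckStep) (a b : ℕ) :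
    dec (replicate d D ++ (U :: w)) a b = (a, b + d) :: dec (U :: w) a (b + d) := by
  induction d generalizing b with
  | zero => omega
  | succ d ih =>
    rw [replicate_succ, cons_append]
    rcases Nat.eq_zero_or_pos d with rfl | hd'
    · show (match (replicate 0 D ++ (U :: w) : List DyckStep) with
         | U :: _ => [(a, b + 1)]
         | _ => []) ++ dec (replicate 0 D ++ (U :: w)) a (b + 1) = _
      simp
    · show (match (replicate d D ++ (U :: w) : List DyckStep) with
         | U :: _ => [(a, b + 1)]
         | _ => []) ++ dec (replicate d D ++ (U :: w)) a (b + 1) = _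
      rw [ih hd']
      have hrep : replicate d D ++ (U :: w) = D :: (replicate (d - 1) D ++ (U :: w)) := by
        cases d with
        | zero => omega
        | succ d => simp [replicate_succ]
      rw [hrep]
      simp only [nil_append]
      congr 2 <;> omega

/-- For a nonempty valid tail, `enc` exposes a leading `U`. -/
lemma enc_cons_eq {a b i j : ℕ} (t : List (ℕ × ℕ)) (hai : a < i) :
    enc a b ((i, j) :: t) =
      U :: (replicate (i - (a + 1)) U ++ (replicate (j - b) D ++ enc i j t)) := by
  rw [enc_cons, show i - a = (i - (a + 1)) + 1 by omega, replicate_succ, cons_append]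

lemma dec_enc {m : List (ℕ × ℕ)} : ∀ {a b : ℕ}, Incr a b m →
    dec (enc a b m) a b = m.dropLast := by
  induction m with
  | nil => intro a b _; simp [enc_nil, dec]
  | cons p t ih =>
    intro a b h
    obtain ⟨i, j⟩ := p
    rw [Incr, List.Chain, chain_cons] at h
    have h1 : a < i := h.1.1
    have h2 : b < j := h.1.2
    rw [enc_cons, dec_replicate_U, show a + (i - a) = i by omega]
    cases t with
    | nil =>
      rw [enc_nil, append_nil, dec_replicate_D_nil]
      rfl
    | cons q t' =>
      obtain ⟨i', j'⟩ := q
      rw [chain_cons] at h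
      have h3 : i < i' := h.2.1.1
      rw [enc_cons_eq _ h3, dec_replicate_D_U (by omega),
        show b + (j - b) = j by omega, ← enc_cons_eq _ h3,
        ih (chain_cons.mpr h.2)]
      rfl

lemma enc_shift {a b i j : ℕ} (t : List (ℕ × ℕ)) (h : a < i) :
    enc a b ((i, j) :: t) = U :: enc (a + 1) b ((i, j) :: t) := by
  rw [enc_cons, enc_cons, show i - a = (i - (a + 1)) + 1 by omega, replicate_succ, cons_append]

/-- Every word starting with `U` and ending with `D` is an encoded word. -/
lemma exists_enc : ∀ N (w : List DyckStep), w.length ≤ N →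
    (∀ a b : ℕ, w.head? = some U → w.getLast? = some D →
      ∃ m, Incr a b m ∧ enc a b m = w) ∧
    (∀ i b : ℕ, w.head? = some D → w.getLast? = some D →
      ∃ j t, b < j ∧ Chain R (i, j) t ∧ replicate (j - b) D ++ enc i j t = w) := by
  intro N
  induction N with
  | zero =>
    intro w hw
    rw [Nat.le_zero, length_eq_zero_iff] at hw
    subst hw
    constructor <;> intro _ _ h _ <;> simp at h
  | succ N ihN =>
    intro w hw
    constructor
    · rintro a b hU hD
      cases w with
      | nil => simp at hU
      | cons s w₁ =>
        rw [head?_cons, Option.some_inj] at hU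
        subst hU
        cases w₁ with
        | nil => simp at hD
        | cons s₂ w₂ =>
          rw [getLast?_cons_cons] at hD
          have hlen : (s₂ :: w₂).length ≤ N := by simp at hw ⊢; omega
          cases s₂ with
          | U =>
            obtain ⟨m, hm, he⟩ := (ihN _ hlen).1 (a + 1) b (by simp) hD
            cases m with
            | nil => rw [enc_nil] at he; exact absurd he.symm (by simp)
            | cons p t =>
              obtain ⟨i, j⟩ := p
              rw [Incr, List.Chain, chain_cons] at hm
              have hai : a + 1 < i := hm.1.1
              refine ⟨(i, j) :: t, chain_cons.mpr ⟨⟨by omega, hm.1.2⟩, hm.2⟩, ?_⟩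
              rw [enc_shift _ (by omega), he]
          | D =>
            obtain ⟨j, t, hbj, hc, he⟩ := (ihN _ hlen).2 (a + 1) b (by simp) hD
            refine ⟨(a + 1, j) :: t, chain_cons.mpr ⟨⟨by omega, hbj⟩, hc⟩, ?_⟩
            rw [enc_cons, show a + 1 - a = 1 by omega, he]
            rfl
    · rintro i b hU hD
      cases w with
      | nil => simp at hU
      | cons s w₁ =>
        rw [head?_cons, Option.some_inj] at hU
        subst hU
        cases w₁ with
        | nil =>
          refine ⟨b + 1, [], by omega, List.Chain.nil, ?_⟩
          rw [enc_nil, show b + 1 - b = 1 by omega]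
          rfl
        | cons s₂ w₂ =>
          rw [getLast?_cons_cons] at hD
          have hlen : (s₂ :: w₂).length ≤ N := by simp at hw ⊢; omega
          cases s₂ with
          | U =>
            obtain ⟨m, hm, he⟩ := (ihN _ hlen).1 i (b + 1) (by simp) hD
            refine ⟨b + 1, m, by omega, hm, ?_⟩
            rw [show b + 1 - b = 1 by omega, he]
            rfl
          | D =>
            obtain ⟨j, t, hbj, hc, he⟩ := (ihN _ hlen).2 i (b + 1) (by simp) hD
            refine ⟨j, t, by omega, hc, ?_⟩
            rw [show j - b = (j - (b + 1)) + 1 by omega, replicate_succ, cons_append, he]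

/-- Extract `snd ≤ fst` for all entries from the prefix condition. -/
lemma snd_le_fst : ∀ {m : List (ℕ × ℕ)} {a b : ℕ}, Incr a b m →
    (∀ k, (take k (enc a b m)).count D + b ≤ (take k (enc a b m)).count U + a) →
    ∀ p ∈ m, p.2 ≤ p.1 := by
  intro m
  induction m with
  | nil => simp
  | cons p t ih =>
    intro a b h hpre
    obtain ⟨i, j⟩ := p
    rw [Incr, List.Chain, chain_cons] at h
    have h1 : a < i := h.1.1
    have h2 : b < j := h.1.2
    have key : ∀ k, (take k (enc i j t)).count D + j ≤ (take k (enc i j t)).count U + i := by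
      intro k
      have hp := hpre ((replicate (i - a) U ++ replicate (j - b) D).length + k)
      rw [enc_cons, ← append_assoc, take_length_add_append, count_append, count_append,
        count_append, count_append] at hp
      simp only [count_append, countU_repU, countU_repD, countD_repD, countD_repU] at hp
      omega
    have hji : j ≤ i := by simpa using key 0
    intro q hq
    rcases mem_cons.mp hq with rfl | hq'
    · exact hji
    · exact ih h.2 key q hq'

/-- The set of valley lists. -/
def S (n : ℕ) : Set (List (ℕ × ℕ)) :=
  {l : List (ℕ × ℕ) | l.length ≤ n - 1 ∧
    l.Chain' (fun p q => p.1 < q.1) ∧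
    l.Chain' (fun p q => p.2 < q.2) ∧
    ∀ p ∈ l, 1 ≤ p.2 ∧ p.2 ≤ p.1 ∧ p.1 ≤ n - 1}

/-- The set of Dyck words of semilength `n`, as lists. -/
def T (n : ℕ) : Set (List DyckStep) :=
  {w | w.count U = w.count D ∧ (∀ k, (take k w).count D ≤ (take k w).count U) ∧
    w.count U = n}

/-- The encoding map. -/
def F (n : ℕ) (l : List (ℕ × ℕ)) : List DyckStep := enc 0 0 (l ++ [(n, n)])

lemma snd_le_fst_concat {n : ℕ} {l : List (ℕ × ℕ)} (hl : l ∈ S n) :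
    ∀ p ∈ l ++ [(n, n)], p.2 ≤ p.1 := by
  intro p hp
  rcases mem_append.mp hp with hp | hp
  · exact (hl.2.2.2 p hp).2.1
  · simp at hp; subst hp; exact le_refl n

lemma incr_concat {n : ℕ} (hn : 1 ≤ n) {l : List (ℕ × ℕ)} (hl : l ∈ S n) :
    Incr 0 0 (l ++ [(n, n)]) := by
  obtain ⟨-, h1, h2, h3⟩ := hl
  letI i1 : IsTrans (ℕ × ℕ) (fun p q => p.1 < q.1) := ⟨fun _ _ _ h h' => lt_trans h h'⟩
  letI i2 : IsTrans (ℕ × ℕ) (fun p q => p.2 < q.2) := ⟨fun _ _ _ h h' => lt_trans h h'⟩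
  have hl : List.Pairwise R l := (isChain_iff_pairwise.mp h1).and (isChain_iff_pairwise.mp h2)
  rw [Incr, List.Chain, isChain_iff_pairwise, pairwise_cons]
  constructor
  · intro x hx
    rcases mem_append.mp hx with hx | hx
    · have := h3 x hx
      exact ⟨by omega, by omega⟩
    · simp at hx; subst hx; exact ⟨hn, hn⟩
  · rw [pairwise_append]
    refine ⟨hl, pairwise_singleton _ _, ?_⟩
    intro x hx y hy
    simp only [mem_singleton] at hy
    subst hy
    have := h3 x hx
    exact ⟨by omega, by omega⟩

lemma F_mem_T {n : ℕ} (hn : 1 ≤ n) {l : List (ℕ × ℕ)} (hl : l ∈ S n) : F n l ∈ T n := by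
  have hi := incr_concat hn hl
  have hji := snd_le_fst_concat hl
  have hU : (F n l).count U = n := by
    have := count_U_enc hi
    rwa [getLastD_concat, Nat.add_zero] at this
  have hD : (F n l).count D = n := by
    have := count_D_enc hi
    rwa [getLastD_concat, Nat.add_zero] at this
  refine ⟨by rw [hU, hD], fun k => ?_, hU⟩
  simpa [F] using prefix_count hi hji (le_refl 0) k

lemma injOn_F {n : ℕ} (hn : 1 ≤ n) : Set.InjOn (F n) (S n) := by
  intro l1 h1 l2 h2 he
  have e1 : dec (F n l1) 0 0 = l1 := by
    rw [F, dec_enc (incr_concat hn h1), dropLast_concat]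
  have e2 : dec (F n l2) 0 0 = l2 := by
    rw [F, dec_enc (incr_concat hn h2), dropLast_concat]
  rw [← e1, ← e2, he]

lemma surj_F {n : ℕ} (hn : 2 ≤ n) {w : List DyckStep} (hw : w ∈ T n) :
    ∃ l ∈ S n, F n l = w := by
  obtain ⟨hUD, hpre, hU⟩ := hw
  have hD : w.count D = n := by rw [← hUD, hU]
  have hne : w ≠ [] := by
    intro h
    rw [h] at hU
    simp at hU
    omega
  have hhead : w.head? = some U := by
    cases w with
    | nil => exact absurd rfl hne
    | cons s w' =>
      cases s with
      | U => rfl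
      | D =>
        have := hpre 1
        simp [count_cons] at this
  have hlast : w.getLast? = some D := by
    rw [getLast?_eq_getLast hne]
    congr 1
    by_contra hne'
    have hlU : w.getLast hne = U := (DyckStep.dichotomy _).resolve_right hne'
    have hsplit : w.dropLast ++ [U] = w := by rw [← hlU]; exact dropLast_append_getLast hne
    have := hpre (w.length - 1)
    rw [← dropLast_eq_take] at this
    have hcU : w.dropLast.count U + 1 = n := by
      have := congrArg (count U) hsplit
      simp [count_append] at this
      omega
    have hcD : w.dropLast.count D = n := by
      have := congrArg (count D) hsplit
      simp [count_append, count_singleton] at this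
      omega
    omega
  obtain ⟨m, hm, henc⟩ := (exists_enc w.length w (le_refl _)).1 0 0 hhead hlast
  have hmne : m ≠ [] := by
    intro h
    rw [h, enc_nil] at henc
    exact hne henc.symm
  have hlast1 : (m.getLastD (0, 0)).1 = n := by
    have := count_U_enc hm
    rw [henc] at this
    omega
  have hlast2 : (m.getLastD (0, 0)).2 = n := by
    have := count_D_enc hm
    rw [henc] at this
    omega
  have hgl : m.getLast hmne = (n, n) := by
    rw [getLastD_eq_getLast?, getLast?_eq_getLast hmne] at hlast1 hlast2
    simp at hlast1 hlast2
    exact Prod.ext hlast1 hlast2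
  have hmeq : m.dropLast ++ [(n, n)] = m := by
    rw [← hgl]; exact dropLast_append_getLast hmne
  set l := m.dropLast with hldef
  have hpw : List.Pairwise R ((0, 0) :: m) := by
    rw [Incr, List.Chain, isChain_iff_pairwise] at hm
    exact hm
  have hji : ∀ p ∈ m, p.2 ≤ p.1 := by
    refine snd_le_fst hm fun k => ?_
    rw [henc]
    simpa using hpre k
  have hmem : ∀ p ∈ l, 1 ≤ p.2 ∧ p.2 ≤ p.1 ∧ p.1 ≤ n - 1 := by
    intro p hp
    have hpm : p ∈ m := dropLast_subset m hp
    have h0 : R (0, 0) p := (pairwise_cons.mp hpw).1 p hpm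
    have hxn : R p (n, n) := by
      have := (pairwise_append.mp (by rw [hmeq]; exact (pairwise_cons.mp hpw).2)).2.2
      exact this p hp (n, n) (by simp)
    exact ⟨h0.2, hji p hpm, by have := hxn.1; omega⟩
  have hpl : List.Pairwise R l :=
    ((pairwise_cons.mp hpw).2).sublist (dropLast_sublist m)
  letI i1 : IsTrans (ℕ × ℕ) (fun p q : ℕ × ℕ => p.1 < q.1) :=
    ⟨fun _ _ _ h h' => lt_trans h h'⟩
  letI i2 : IsTrans (ℕ × ℕ) (fun p q : ℕ × ℕ => p.2 < q.2) :=
    ⟨fun _ _ _ h h' => lt_trans h h'⟩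
  have hc1 : l.Chain' (fun p q => p.1 < q.1) :=
    isChain_iff_pairwise.mpr (hpl.imp fun h => h.1)
  have hc2 : l.Chain' (fun p q => p.2 < q.2) :=
    isChain_iff_pairwise.mpr (hpl.imp fun h => h.2)
  have hlen : l.length ≤ n - 1 := by
    have hnd : (l.map Prod.fst).Nodup :=
      List.Pairwise.map Prod.fst (fun a b h => h.1) hpl |>.imp Nat.ne_of_lt
    have hsub : (l.map Prod.fst).toFinset ⊆ Finset.Icc 1 (n - 1) := by
      intro x hx
      rw [List.mem_toFinset, List.mem_map] at hx
      obtain ⟨p, hp, rfl⟩ := hx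
      have := hmem p hp
      rw [Finset.mem_Icc]
      omega
    have := Finset.card_le_card hsub
    rw [List.toFinset_card_of_nodup hnd, Nat.card_Icc, List.length_map] at this
    omega
  refine ⟨l, ⟨hlen, hc1, hc2, hmem⟩, ?_⟩
  rw [F, hmeq, henc]

lemma image_F {n : ℕ} (hn : 2 ≤ n) : F n '' S n = T n := by
  apply Set.eq_of_subset_of_subset
  · rintro w ⟨l, hl, rfl⟩
    exact F_mem_T (by omega) hl
  · intro w hw
    obtain ⟨l, hl, he⟩ := surj_F hn hw
    exact ⟨l, hl, he⟩

lemma ncard_T {n : ℕ} : (T n).ncard = catalan n := by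
  rw [← Nat.card_coe_set_eq]
  have e : ↥(T n) ≃ { p : DyckWord // p.semilength = n } :=
    { toFun := fun w => ⟨⟨w.1, w.2.1, fun i => w.2.2.1 i⟩, w.2.2.2⟩
      invFun := fun p => ⟨p.1.toList, p.1.count_U_eq_count_D, fun k => p.1.count_D_le_count_U k,
        p.2⟩
      left_inv := fun w => rfl
      right_inv := fun p => rfl }
  rw [Nat.card_congr e, Nat.card_eq_fintype_card,
    DyckWord.card_dyckWord_semilength_eq_catalan]

lemma ncard_S {n : ℕ} (hn : 2 ≤ n) : (S n).ncard = catalan n := by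
  rw [← Set.ncard_image_of_injOn (injOn_F (by omega : 1 ≤ n)), image_F hn, ncard_T]

end TLCount

theorem count_typeA_standard_monomials (n : ℕ) (hn : 2 ≤ n) :
    (n + 1) * ({l : List (ℕ × ℕ) | l.length ≤ n - 1 ∧
        l.Chain' (fun p q => p.1 < q.1) ∧
        l.Chain' (fun p q => p.2 < q.2) ∧
        ∀ p ∈ l, 1 ≤ p.2 ∧ p.2 ≤ p.1 ∧ p.1 ≤ n - 1}).ncard = (2 * n).choose n := by
  have : ({l : List (ℕ × ℕ) | l.length ≤ n - 1 ∧
      l.Chain' (fun p q => p.1 < q.1) ∧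
      l.Chain' (fun p q => p.2 < q.2) ∧
      ∀ p ∈ l, 1 ≤ p.2 ∧ p.2 ≤ p.1 ∧ p.1 ≤ n - 1}) = TLCount.S n := rfl
  rw [this, TLCount.ncard_S hn, succ_mul_catalan_eq_centralBinom,
    Nat.centralBinom_eq_two_mul_choose]
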